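/- Let P be the transition operator of a Markov chain reversible with respect to probability measure π, which is V-uniformly ergodic with spectral radius ρ_V of P − 1⊗π on the V-weighted sup-norm space B_V. Then for every f ∈ L²(π): ‖P^n f − ∫f dπ‖_{L²(π)} ≤ ρ_V^n ‖f − ∫f dπ‖_{L²(π)}; in particular the L²(π)-spectral radius of P − 1⊗π is at most ρ_V. -/

import Mathlib

open MeasureTheory ProbabilityTheory
open scoped ENNReal NNReal
open Set
set_option linter.unusedSectionVars false
set_option linter.deprecated false
set_option linter.unnecessarySimpa false
set_option linter.unusedVariables false
set_option maxHeartbeats 1000000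


/-- The `n`-step transition kernel of a Markov chain with one-step kernel `κ`. -/
noncomputable def iterKer {S : Type*} [MeasurableSpace S] (κ : Kernel S S) :
    ℕ → Kernel S S
  | 0 => Kernel.id
  | n + 1 => κ ∘ₖ iterKer κ n

lemma abstract_contraction {B : ℕ → ℝ} {G0 C δ : ℝ}
    (hBnn : ∀ m, 0 ≤ B m) (hG0 : 0 ≤ G0) (hδ : 0 < δ)
    (hCS : ∀ m, (B m)^2 ≤ G0 * B (2*m))
    (hC : ∀ m, B m ≤ C * δ^m) :
    B 1 ≤ δ * G0 := by
  rcases eq_or_lt_of_le hG0 with hG0z | hG0pos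
  · have h1 : (B 1)^2 ≤ G0 * B 2 := hCS 1
    rw [← hG0z, zero_mul] at h1
    have : B 1 = 0 := by nlinarith [hBnn 1]
    rw [this, ← hG0z, mul_zero]
  · by_contra hcon
    push_neg at hcon
    set t : ℝ := δ * G0 with ht_def
    have ht : 0 < t := mul_pos hδ hG0pos
    have hr : 1 < B 1 / t := (one_lt_div ht).mpr hcon
    have hkey : ∀ k : ℕ, B 1 ^ (2^k) ≤ B (2^k) * G0 ^ (2^k - 1) := by
      intro k
      induction k with
      | zero => simpa using le_refl (B 1)
      | succ k ih =>
        have h1 : B 1 ^ (2^(k+1)) = (B 1 ^ (2^k))^2 := by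
          rw [← pow_mul, pow_succ]
        have h2 : (B 1 ^ (2^k))^2 ≤ (B (2^k) * G0 ^ (2^k - 1))^2 :=
          pow_le_pow_left₀ (pow_nonneg (hBnn 1) _) ih 2
        have h3 : (B (2^k) * G0 ^ (2^k - 1))^2 = (B (2^k))^2 * G0 ^ (2*(2^k - 1)) := by
          rw [mul_pow, ← pow_mul]; ring_nf
        have h4 : (B (2^k))^2 * G0 ^ (2*(2^k - 1)) ≤ (G0 * B (2^(k+1))) * G0 ^ (2*(2^k - 1)) := by
          have := hCS (2^k)
          rw [show 2 * 2^k = 2^(k+1) by rw [pow_succ]; ring] at this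
          exact mul_le_mul_of_nonneg_right this (pow_nonneg hG0 _)
        have h5 : (G0 * B (2^(k+1))) * G0 ^ (2*(2^k - 1)) = B (2^(k+1)) * G0 ^ (2^(k+1) - 1) := by
          have he : 2*(2^k - 1) + 1 = 2^(k+1) - 1 := by
            have h2k : 1 ≤ 2^k := Nat.one_le_two_pow
            have : 2^(k+1) = 2 * 2^k := by rw [pow_succ]; ring
            omega
          rw [← he, pow_succ]
          ring
        calc B 1 ^ (2^(k+1)) = (B 1 ^ (2^k))^2 := h1
          _ ≤ (B (2^k) * G0 ^ (2^k - 1))^2 := h2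
          _ = (B (2^k))^2 * G0 ^ (2*(2^k - 1)) := h3
          _ ≤ (G0 * B (2^(k+1))) * G0 ^ (2*(2^k - 1)) := h4
          _ = B (2^(k+1)) * G0 ^ (2^(k+1) - 1) := h5
    have hratio : ∀ k : ℕ, (B 1 / t) ^ (2^k) ≤ C / G0 := by
      intro k
      have h1 : B 1 ^ (2^k) ≤ C * δ^(2^k) * G0 ^ (2^k - 1) := by
        refine (hkey k).trans ?_
        exact mul_le_mul_of_nonneg_right (hC (2^k)) (pow_nonneg hG0 _)
      rw [div_pow, div_le_div_iff₀ (pow_pos ht _) hG0pos]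
      have h2 : t ^ (2^k) = δ^(2^k) * G0^(2^k) := mul_pow δ G0 (2^k)
      have h3 : G0 ^ (2^k - 1) * G0 = G0 ^ (2^k) := by
        rw [← pow_succ]
        congr 1
        have := Nat.one_le_two_pow (n := k)
        omega
      calc B 1 ^ (2^k) * G0 ≤ (C * δ^(2^k) * G0 ^ (2^k - 1)) * G0 :=
            mul_le_mul_of_nonneg_right h1 hG0
        _ = C * (δ^(2^k) * (G0 ^ (2^k - 1) * G0)) := by ring
        _ = C * t ^ (2^k) := by rw [h3, h2]
    obtain ⟨n, hn⟩ := pow_unbounded_of_one_lt (C / G0) hr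
    have h2n : (B 1 / t) ^ n ≤ (B 1 / t) ^ (2^n) :=
      pow_le_pow_right₀ hr.le (Nat.lt_two_pow_self (n := n)).le
    exact absurd ((hratio n).trans_lt (hn.trans_le h2n)) (lt_irrefl _).elim


lemma rpow_half_sq {a b r : ℝ} (ha : 0 ≤ a) (hb : 0 ≤ b) (hr : 0 ≤ r)
    (h : a ≤ r^2 * b) : a ^ (2:ℝ)⁻¹ ≤ r * b ^ (2:ℝ)⁻¹ := by
  have h1 : a ^ (2:ℝ)⁻¹ ≤ (r^2 * b) ^ (2:ℝ)⁻¹ :=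
    Real.rpow_le_rpow ha h (by norm_num)
  have h2 : ((r^2 * b):ℝ) ^ (2:ℝ)⁻¹ = (r^2) ^ (2:ℝ)⁻¹ * b ^ (2:ℝ)⁻¹ :=
    Real.mul_rpow (sq_nonneg r) hb
  have h3 : ((r^2:ℝ)) ^ (2:ℝ)⁻¹ = r := by
    rw [← Real.rpow_natCast r 2, ← Real.rpow_mul hr]
    norm_num
  rw [h2, h3] at h1
  exact h1


section aux
variable {S : Type*} [MeasurableSpace S] (κ : Kernel S S) [IsMarkovKernel κ]
  (π : Measure S) [IsProbabilityMeasure π]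

instance iterKer.isMarkov (n : ℕ) : IsMarkovKernel (iterKer κ n) := by
  induction n with
  | zero => rw [iterKer]; infer_instance
  | succ n ih => rw [iterKer]; infer_instance

lemma iterKer_zero (x : S) : iterKer κ 0 x = Measure.dirac x := by
  rw [iterKer, Kernel.id_apply]

lemma iterKer_succ (n : ℕ) (x : S) : iterKer κ (n+1) x = (iterKer κ n x).bind κ := by
  rw [iterKer, Kernel.comp_apply]

lemma bddInt {m : Measure S} [IsFiniteMeasure m] {f : S → ℝ} (hf : Measurable f) {c : ℝ}
    (hc : ∀ x, |f x| ≤ c) : Integrable f m :=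
  (integrable_const c).mono' hf.aestronglyMeasurable
    (Filter.Eventually.of_forall (by simpa [Real.norm_eq_abs] using hc))

lemma bddMemLp {m : Measure S} [IsFiniteMeasure m] {f : S → ℝ} (hf : Measurable f) {c : ℝ}
    (hc : ∀ x, |f x| ≤ c) (p : ℝ≥0∞) : MemLp f p m :=
  MemLp.mono_exponent
    (memLp_top_of_bound hf.aestronglyMeasurable c
      (Filter.Eventually.of_forall (by simpa [Real.norm_eq_abs] using hc))) le_top

/-- The `n`-step averaging operator. -/
noncomputable def Tk (n : ℕ) (f : S → ℝ) (x : S) : ℝ := ∫ y, f y ∂(iterKer κ n x)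

lemma Tk_meas {f : S → ℝ} (hf : Measurable f) (n : ℕ) : Measurable (Tk κ n f) := by
  have : StronglyMeasurable fun x => ∫ y, (fun p : S × S => f p.2) (x, y) ∂(iterKer κ n x) :=
    StronglyMeasurable.integral_kernel_prod_right'
      ((hf.comp measurable_snd).stronglyMeasurable)
  exact this.measurable

lemma Tk_bdd {f : S → ℝ} (hf : Measurable f) {c : ℝ} (hc : ∀ x, |f x| ≤ c) (n : ℕ) (x : S) :
    |Tk κ n f x| ≤ c := by
  have h1 : |Tk κ n f x| ≤ ∫ y, |f y| ∂(iterKer κ n x) := by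
    simpa [Tk, Real.norm_eq_abs] using
      norm_integral_le_integral_norm (μ := iterKer κ n x) f
  refine h1.trans ?_
  calc ∫ y, |f y| ∂(iterKer κ n x) ≤ ∫ _, c ∂(iterKer κ n x) := by
        refine integral_mono ((bddInt hf hc).abs) (integrable_const c) (fun y => hc y)
    _ = c := by simp

lemma Tk_zero {f : S → ℝ} (hf : Measurable f) (x : S) : Tk κ 0 f x = f x := by
  rw [Tk, iterKer_zero, integral_dirac' f x hf.stronglyMeasurable]

lemma Tk_one {f : S → ℝ} (x : S) : Tk κ 1 f x = ∫ y, f y ∂(κ x) := by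
  rw [Tk, iterKer_succ, iterKer_zero, Measure.dirac_bind (Kernel.measurable κ)]

lemma bind_eq_snd (m : Measure S) [IsProbabilityMeasure m] :
    m.bind κ = (m ⊗ₘ κ).snd := by
  ext s hs
  rw [Measure.bind_apply hs (Kernel.measurable κ).aemeasurable, Measure.snd_apply hs,
    Measure.compProd_apply (measurable_snd hs)]
  rfl

lemma integral_bind_ker (m : Measure S) [IsProbabilityMeasure m] {f : S → ℝ}
    (hf : Measurable f) {c : ℝ} (hc : ∀ x, |f x| ≤ c) :
    ∫ z, f z ∂(m.bind κ) = ∫ y, ∫ z, f z ∂(κ y) ∂m := by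
  rw [bind_eq_snd κ m, Measure.snd, integral_map measurable_snd.aemeasurable
    hf.aestronglyMeasurable]
  exact Measure.integral_compProd
    ((integrable_const c).mono' (hf.comp measurable_snd).aestronglyMeasurable
      (Filter.Eventually.of_forall (fun p => by simpa [Real.norm_eq_abs] using hc p.2)))

lemma Tk_succ {f : S → ℝ} (hf : Measurable f) {c : ℝ} (hc : ∀ x, |f x| ≤ c) (n : ℕ) (x : S) :
    Tk κ (n+1) f x = Tk κ n (Tk κ 1 f) x := by
  rw [Tk, iterKer_succ, integral_bind_ker κ _ hf hc]
  exact integral_congr_ae (Filter.Eventually.of_forall fun y => (Tk_one κ y).symm)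

lemma Tk_succ' {f : S → ℝ} (hf : Measurable f) {c : ℝ} (hc : ∀ x, |f x| ≤ c) (n : ℕ) (x : S) :
    Tk κ (n+1) f x = Tk κ 1 (Tk κ n f) x := by
  induction n generalizing f c with
  | zero =>
    congr 1
    funext y
    rw [Tk_zero κ hf]
  | succ n ih =>
    rw [Tk_succ κ hf hc, ih (Tk_meas κ hf 1) (Tk_bdd κ hf hc 1)]
    congr 1
    funext y
    rw [← Tk_succ κ hf hc]
lemma setLint_eq {A B : Set S} (hB : MeasurableSet B) :
    ∫ x in A, (κ x B).toReal ∂π = (∫⁻ x in A, κ x B ∂π).toReal := by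
  rw [integral_toReal ((Kernel.measurable_coe κ hB).aemeasurable.restrict)]
  exact Filter.Eventually.of_forall fun x => (measure_lt_top _ _)

lemma setLint_ne_top {A B : Set S} : ∫⁻ x in A, κ x B ∂π ≠ ⊤ := by
  have h : ∫⁻ x in A, κ x B ∂π ≤ π A := by
    calc ∫⁻ x in A, κ x B ∂π ≤ ∫⁻ _ in A, 1 ∂π := lintegral_mono fun x => prob_le_one
      _ = π A := by simp
  exact ne_of_lt (lt_of_le_of_lt h (lt_of_le_of_lt prob_le_one ENNReal.one_lt_top))

lemma symm_compProd
    (hrev : ∀ A B : Set S, MeasurableSet A → MeasurableSet B →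
      ∫ x in A, (κ x B).toReal ∂π = ∫ x in B, (κ x A).toReal ∂π) :
    (π ⊗ₘ κ).map Prod.swap = π ⊗ₘ κ := by
  refine ext_of_generate_finite _ generateFrom_prod.symm isPiSystem_prod ?_ ?_
  · rintro s ⟨A, hA, B, hB, rfl⟩
    simp only [mem_setOf_eq] at hA hB
    rw [Measure.map_apply measurable_swap (hA.prod hB)]
    have hsw : Prod.swap ⁻¹' (A ×ˢ B) = B ×ˢ A := by
      ext p; simp [and_comm]
    rw [hsw, Measure.compProd_apply_prod hB hA, Measure.compProd_apply_prod hA hB]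
    have h1 := hrev A B hA hB
    rw [setLint_eq κ π hB, setLint_eq κ π hA] at h1
    exact ((ENNReal.toReal_eq_toReal_iff' (setLint_ne_top κ π) (setLint_ne_top κ π)).mp h1).symm
  · rw [Measure.map_apply measurable_swap MeasurableSet.univ]; simp

lemma selfadj
    (hrev : ∀ A B : Set S, MeasurableSet A → MeasurableSet B →
      ∫ x in A, (κ x B).toReal ∂π = ∫ x in B, (κ x A).toReal ∂π)
    {f g : S → ℝ} (hf : Measurable f) {cf : ℝ} (hcf : ∀ x, |f x| ≤ cf)
    (hg : Measurable g) {cg : ℝ} (hcg : ∀ x, |g x| ≤ cg) :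
    ∫ x, (Tk κ 1 f x) * g x ∂π = ∫ x, f x * (Tk κ 1 g x) ∂π := by
  have hm1 : Measurable (fun p : S × S => f p.2 * g p.1) :=
    (hf.comp measurable_snd).mul (hg.comp measurable_fst)
  have hm2 : Measurable (fun p : S × S => f p.1 * g p.2) :=
    (hf.comp measurable_fst).mul (hg.comp measurable_snd)
  have hfg : Integrable (fun p : S × S => f p.2 * g p.1) (π ⊗ₘ κ) := by
    refine (integrable_const (|cf| * |cg|)).mono' hm1.aestronglyMeasurable
      (Filter.Eventually.of_forall fun p => ?_)
    rw [Real.norm_eq_abs, abs_mul]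
    exact mul_le_mul ((hcf p.2).trans (le_abs_self _)) ((hcg p.1).trans (le_abs_self _))
      (abs_nonneg _) (abs_nonneg _)
  have hgf : Integrable (fun p : S × S => f p.1 * g p.2) (π ⊗ₘ κ) := by
    refine (integrable_const (|cf| * |cg|)).mono' hm2.aestronglyMeasurable
      (Filter.Eventually.of_forall fun p => ?_)
    rw [Real.norm_eq_abs, abs_mul]
    exact mul_le_mul ((hcf p.1).trans (le_abs_self _)) ((hcg p.2).trans (le_abs_self _))
      (abs_nonneg _) (abs_nonneg _)
  have h1 : ∫ x, (Tk κ 1 f x) * g x ∂π = ∫ p : S × S, f p.2 * g p.1 ∂(π ⊗ₘ κ) := by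
    rw [Measure.integral_compProd hfg]
    refine integral_congr_ae (Filter.Eventually.of_forall fun x => ?_)
    show Tk κ 1 f x * g x = ∫ y, f y * g x ∂(κ x)
    rw [Tk_one, integral_mul_const]
  have h3 : ∫ p : S × S, f p.1 * g p.2 ∂(π ⊗ₘ κ) = ∫ x, f x * (Tk κ 1 g x) ∂π := by
    rw [Measure.integral_compProd hgf]
    refine integral_congr_ae (Filter.Eventually.of_forall fun x => ?_)
    show (∫ y, f x * g y ∂(κ x)) = f x * Tk κ 1 g x
    rw [Tk_one, integral_const_mul]
  have h2 : ∫ p : S × S, f p.2 * g p.1 ∂(π ⊗ₘ κ) = ∫ p : S × S, f p.1 * g p.2 ∂(π ⊗ₘ κ) := by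
    conv_lhs => rw [← symm_compProd κ π hrev]
    rw [integral_map (φ := Prod.swap) measurable_swap.aemeasurable
      (f := fun p : S × S => f p.2 * g p.1) hm1.aestronglyMeasurable]
    simp only [Prod.snd_swap, Prod.fst_swap]
  rw [h1, h2, h3]

lemma Tk_one_const (x : S) (c : ℝ) : Tk κ 1 (fun _ => c) x = c := by
  rw [Tk_one]; simp

lemma int_Tk_one
    (hrev : ∀ A B : Set S, MeasurableSet A → MeasurableSet B →
      ∫ x in A, (κ x B).toReal ∂π = ∫ x in B, (κ x A).toReal ∂π)
    {f : S → ℝ} (hf : Measurable f) {c : ℝ} (hc : ∀ x, |f x| ≤ c) :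
    ∫ x, Tk κ 1 f x ∂π = ∫ x, f x ∂π := by
  have := selfadj κ π hrev hf hc measurable_const (fun x => (by simp : |(1:ℝ)| ≤ 1))
  simpa [Tk_one_const] using this

lemma int_Tk
    (hrev : ∀ A B : Set S, MeasurableSet A → MeasurableSet B →
      ∫ x in A, (κ x B).toReal ∂π = ∫ x in B, (κ x A).toReal ∂π)
    {f : S → ℝ} (hf : Measurable f) {c : ℝ} (hc : ∀ x, |f x| ≤ c) (n : ℕ) :
    ∫ x, Tk κ n f x ∂π = ∫ x, f x ∂π := by
  induction n generalizing f c with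
  | zero => exact integral_congr_ae (Filter.Eventually.of_forall fun x => Tk_zero κ hf x)
  | succ n ih =>
    have h1 : ∫ x, Tk κ (n+1) f x ∂π = ∫ x, Tk κ 1 (Tk κ n f) x ∂π :=
      integral_congr_ae (Filter.Eventually.of_forall fun x => Tk_succ' κ hf hc n x)
    rw [h1, int_Tk_one κ π hrev (Tk_meas κ hf n) (Tk_bdd κ hf hc n)]
    exact ih hf hc


lemma cs_int {u v : S → ℝ} (hu : Measurable u) {cu : ℝ} (hcu : ∀ x, |u x| ≤ cu)
    (hv : Measurable v) {cv : ℝ} (hcv : ∀ x, |v x| ≤ cv) :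
    (∫ x, u x * v x ∂π)^2 ≤ (∫ x, u x^2 ∂π) * (∫ x, v x^2 ∂π) := by
  have hpq : Real.HolderConjugate 2 2 := Real.HolderConjugate.two_two
  have hu2 : MemLp (fun x => |u x|) (ENNReal.ofReal 2) π :=
    bddMemLp hu.abs (fun x => by simpa [abs_abs] using (hcu x).trans (le_abs_self cu)) _
  have hv2 : MemLp (fun x => |v x|) (ENNReal.ofReal 2) π :=
    bddMemLp hv.abs (fun x => by simpa [abs_abs] using (hcv x).trans (le_abs_self cv)) _
  have h := integral_mul_le_Lp_mul_Lq_of_nonneg hpq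
    (Filter.Eventually.of_forall fun x => abs_nonneg (u x))
    (Filter.Eventually.of_forall fun x => abs_nonneg (v x)) hu2 hv2
  have hA : ∫ x, |u x| ^ (2:ℝ) ∂π = ∫ x, u x ^ 2 ∂π := by
    refine integral_congr_ae (Filter.Eventually.of_forall fun x => ?_)
    show |u x| ^ (2:ℝ) = u x ^ 2
    rw [show ((2:ℝ)) = ((2:ℕ):ℝ) by norm_num, Real.rpow_natCast, sq_abs]
  have hB : ∫ x, |v x| ^ (2:ℝ) ∂π = ∫ x, v x ^ 2 ∂π := by
    refine integral_congr_ae (Filter.Eventually.of_forall fun x => ?_)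
    show |v x| ^ (2:ℝ) = v x ^ 2
    rw [show ((2:ℝ)) = ((2:ℕ):ℝ) by norm_num, Real.rpow_natCast, sq_abs]
  rw [hA, hB] at h
  have hAnn : 0 ≤ ∫ x, u x ^ 2 ∂π := integral_nonneg fun x => sq_nonneg _
  have hBnn : 0 ≤ ∫ x, v x ^ 2 ∂π := integral_nonneg fun x => sq_nonneg _
  have h1 : |∫ x, u x * v x ∂π| ≤ ∫ x, |u x| * |v x| ∂π := by
    have := norm_integral_le_integral_norm (μ := π) (fun x => u x * v x)
    simpa [Real.norm_eq_abs, abs_mul] using this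
  calc (∫ x, u x * v x ∂π)^2 = |∫ x, u x * v x ∂π|^2 := (sq_abs _).symm
    _ ≤ (∫ x, |u x| * |v x| ∂π)^2 := by
        have h0 : 0 ≤ ∫ x, |u x| * |v x| ∂π :=
          integral_nonneg fun x => mul_nonneg (abs_nonneg _) (abs_nonneg _)
        exact pow_le_pow_left₀ (abs_nonneg _) h1 2
    _ ≤ ((∫ x, u x ^ 2 ∂π) ^ (1/(2:ℝ)) * (∫ x, v x ^ 2 ∂π) ^ (1/(2:ℝ)))^2 := by
        refine pow_le_pow_left₀ (integral_nonneg fun x =>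
          mul_nonneg (abs_nonneg _) (abs_nonneg _)) h 2
    _ = (∫ x, u x ^ 2 ∂π) * (∫ x, v x ^ 2 ∂π) := by
        rw [mul_pow, ← Real.rpow_natCast (_ ^ (1/(2:ℝ))) 2, ← Real.rpow_natCast (_ ^ (1/(2:ℝ))) 2,
          ← Real.rpow_mul hAnn, ← Real.rpow_mul hBnn]
        norm_num


lemma eLpNorm_sq_eq {u : S → ℝ} (hu : Measurable u) {c : ℝ} (hc : ∀ x, |u x| ≤ c) :
    eLpNorm u 2 π = ENNReal.ofReal ((∫ x, u x ^ 2 ∂π) ^ (2:ℝ)⁻¹) := by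
  have hmem : MemLp u 2 π := bddMemLp hu hc 2
  rw [hmem.eLpNorm_eq_integral_rpow_norm (by norm_num) (by norm_num)]
  congr 1
  have h1 : ∫ x, ‖u x‖ ^ (2:ℝ≥0∞).toReal ∂π = ∫ x, u x ^ 2 ∂π := by
    refine integral_congr_ae (Filter.Eventually.of_forall fun x => ?_)
    show ‖u x‖ ^ (2:ℝ≥0∞).toReal = u x ^ 2
    rw [ENNReal.toReal_ofNat, Real.norm_eq_abs,
      show ((2:ℝ)) = ((2:ℕ):ℝ) by norm_num, Real.rpow_natCast, sq_abs]
  rw [h1]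
  norm_num


lemma bind_pi (hinv : ∀ A : Set S, MeasurableSet A → ∫ x, (κ x A).toReal ∂π = (π A).toReal) :
    π.bind ⇑κ = π := by
  ext s hs
  rw [Measure.bind_apply hs (Kernel.measurable κ).aemeasurable]
  have h1 := hinv s hs
  rw [integral_toReal ((Kernel.measurable_coe κ hs).aemeasurable)
    (Filter.Eventually.of_forall fun x => measure_lt_top _ _)] at h1
  have h2 : ∫⁻ x, κ x s ∂π ≠ ⊤ := by
    refine ne_of_lt (lt_of_le_of_lt (lintegral_mono fun x => (prob_le_one : κ x s ≤ 1)) ?_)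
    simpa using ENNReal.one_lt_top
  exact (ENNReal.toReal_eq_toReal_iff' h2 (measure_ne_top π s)).mp h1

lemma bind_pi_iter (hinv : ∀ A : Set S, MeasurableSet A → ∫ x, (κ x A).toReal ∂π = (π A).toReal)
    (n : ℕ) : π.bind ⇑(iterKer κ n) = π := by
  induction n with
  | zero =>
    have h : ⇑(iterKer κ 0) = fun x => Measure.dirac x := funext (iterKer_zero κ)
    rw [h, Measure.bind_dirac]
  | succ n ih =>
    have h : ⇑(iterKer κ (n+1)) = fun x => (iterKer κ n x).bind ⇑κ :=
      funext (iterKer_succ κ n)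
    rw [h, ← Measure.bind_bind (Kernel.measurable (iterKer κ n)).aemeasurable (Kernel.measurable κ).aemeasurable, ih,
      bind_pi κ π hinv]

lemma ae_iter_null
    (hinv : ∀ A : Set S, MeasurableSet A → ∫ x, (κ x A).toReal ∂π = (π A).toReal)
    (n : ℕ) {N : Set S} (hNm : MeasurableSet N) (hN : π N = 0) :
    ∀ᵐ x ∂π, iterKer κ n x N = 0 := by
  have h1 : ∫⁻ x, iterKer κ n x N ∂π = 0 := by
    rw [← Measure.bind_apply hNm (Kernel.measurable (iterKer κ n)).aemeasurable, bind_pi_iter κ π hinv n, hN]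
  rw [lintegral_eq_zero_iff (Kernel.measurable_coe (iterKer κ n) hNm)] at h1
  exact h1

lemma lint_iter_inv
    (hinv : ∀ A : Set S, MeasurableSet A → ∫ x, (κ x A).toReal ∂π = (π A).toReal)
    (n : ℕ) {h : S → ℝ≥0∞} (hh : Measurable h) :
    ∫⁻ x, ∫⁻ y, h y ∂(iterKer κ n x) ∂π = ∫⁻ y, h y ∂π := by
  conv_rhs => rw [← bind_pi_iter κ π hinv n]
  rw [Measure.lintegral_bind (Kernel.measurable (iterKer κ n)).aemeasurable hh.aemeasurable]

section q
variable (hrev : ∀ A B : Set S, MeasurableSet A → MeasurableSet B →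
      ∫ x in A, (κ x B).toReal ∂π = ∫ x in B, (κ x A).toReal ∂π)
  {g : S → ℝ} (hg : Measurable g) {c : ℝ} (hc : ∀ x, |g x| ≤ c)

include hrev hg hc

lemma qshift (a b : ℕ) :
    ∫ x, Tk κ (a+1) g x * Tk κ b g x ∂π = ∫ x, Tk κ a g x * Tk κ (b+1) g x ∂π := by
  calc ∫ x, Tk κ (a+1) g x * Tk κ b g x ∂π
      = ∫ x, Tk κ 1 (Tk κ a g) x * Tk κ b g x ∂π :=
        integral_congr_ae (Filter.Eventually.of_forall fun x => by
          show Tk κ (a+1) g x * Tk κ b g x = Tk κ 1 (Tk κ a g) x * Tk κ b g x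
          rw [Tk_succ' κ hg hc a])
    _ = ∫ x, Tk κ a g x * Tk κ 1 (Tk κ b g) x ∂π :=
        selfadj κ π hrev (Tk_meas κ hg a) (Tk_bdd κ hg hc a)
          (Tk_meas κ hg b) (Tk_bdd κ hg hc b)
    _ = ∫ x, Tk κ a g x * Tk κ (b+1) g x ∂π :=
        (integral_congr_ae (Filter.Eventually.of_forall fun x => by
          show Tk κ a g x * Tk κ (b+1) g x = Tk κ a g x * Tk κ 1 (Tk κ b g) x
          rw [Tk_succ' κ hg hc b])).symm

lemma qadd (a b : ℕ) :
    ∫ x, Tk κ a g x * Tk κ b g x ∂π = ∫ x, g x * Tk κ (a+b) g x ∂π := by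
  induction a generalizing b with
  | zero =>
    refine integral_congr_ae (Filter.Eventually.of_forall fun x => ?_)
    show Tk κ 0 g x * Tk κ b g x = g x * Tk κ (0 + b) g x
    rw [Tk_zero κ hg, Nat.zero_add]
  | succ a ih =>
    rw [qshift κ π hrev hg hc a b, ih (b+1), show a + (b+1) = a + 1 + b by omega]

end q


section erg
variable (hrev : ∀ A B : Set S, MeasurableSet A → MeasurableSet B →
      ∫ x in A, (κ x B).toReal ∂π = ∫ x in B, (κ x A).toReal ∂π)
  {V : S → ℝ} (hV1 : ∀ x, 1 ≤ V x) (hVint : Integrable V π)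
  {g : S → ℝ} (hg : Measurable g) {c : ℝ} (hc : ∀ x, |g x| ≤ c) (hc0 : 0 ≤ c)
  (hmean : ∫ x, g x ∂π = 0)

include hrev hV1 hVint hg hc hc0 hmean

lemma Tk_pt_bound {γ M : ℝ}
    (hbd : ∀ g' : S → ℝ, Measurable g' → (∀ x, |g' x| ≤ V x) → ∀ (m : ℕ) (x : S),
      |(∫ y, g' y ∂(iterKer κ m x)) - ∫ y, g' y ∂π| ≤ M * V x * γ ^ m)
    (m : ℕ) (x : S) : |Tk κ m g x| ≤ (c+1) * (M * V x * γ^m) := by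
  have hc1 : (0:ℝ) < c + 1 := by linarith
  have h1 := hbd (fun y => g y / (c+1)) (hg.div_const _) (fun y => by
    rw [abs_div, abs_of_pos hc1]
    refine (div_le_one hc1).mpr ?_ |>.trans (hV1 y)
    linarith [hc y]) m x
  rw [integral_div, integral_div, hmean, zero_div, sub_zero] at h1
  have h2 : |Tk κ m g x| / (c+1) ≤ M * V x * γ^m := by
    rw [← abs_of_pos hc1, ← abs_div]
    exact h1
  calc |Tk κ m g x| = (c+1) * (|Tk κ m g x| / (c+1)) := by field_simp
    _ ≤ (c+1) * (M * V x * γ^m) := by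
        exact mul_le_mul_of_nonneg_left h2 hc1.le

lemma q0_bound {γ M : ℝ}
    (hbd : ∀ g' : S → ℝ, Measurable g' → (∀ x, |g' x| ≤ V x) → ∀ (m : ℕ) (x : S),
      |(∫ y, g' y ∂(iterKer κ m x)) - ∫ y, g' y ∂π| ≤ M * V x * γ ^ m)
    (m : ℕ) :
    ∫ x, g x * Tk κ m g x ∂π ≤ (c * ((c+1) * M) * (∫ x, V x ∂π)) * γ^m := by
  have hpt : ∀ x, g x * Tk κ m g x ≤ (c * ((c+1) * M) * γ^m) * V x := by
    intro x
    have h1 : |g x * Tk κ m g x| ≤ c * ((c+1) * (M * V x * γ^m)) := by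
      rw [abs_mul]
      exact mul_le_mul (hc x) (Tk_pt_bound κ π hrev hV1 hVint hg hc hc0 hmean hbd m x)
        (abs_nonneg _) hc0
    calc g x * Tk κ m g x ≤ |g x * Tk κ m g x| := le_abs_self _
      _ ≤ c * ((c+1) * (M * V x * γ^m)) := h1
      _ = (c * ((c+1) * M) * γ^m) * V x := by ring
  have h2 : ∫ x, g x * Tk κ m g x ∂π ≤ ∫ x, (c * ((c+1) * M) * γ^m) * V x ∂π := by
    refine integral_mono ?_ (hVint.const_mul _) hpt
    refine bddInt (hg.mul (Tk_meas κ hg m)) (c := c * c) (fun x => ?_)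
    rw [abs_mul]
    exact mul_le_mul (hc x) (Tk_bdd κ hg hc m x) (abs_nonneg _) hc0
  rw [integral_const_mul] at h2
  calc ∫ x, g x * Tk κ m g x ∂π ≤ (c * ((c+1) * M) * γ^m) * ∫ x, V x ∂π := h2
    _ = (c * ((c+1) * M) * (∫ x, V x ∂π)) * γ^m := by ring

lemma onestep {ρV : ℝ} (hρ : 0 ≤ ρV)
    (herg : ∀ γ : ℝ, ρV < γ → ∃ M : ℝ, ∀ g' : S → ℝ, Measurable g' →
      (∀ x, |g' x| ≤ V x) → ∀ (m : ℕ) (x : S),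
        |(∫ y, g' y ∂(iterKer κ m x)) - ∫ y, g' y ∂π| ≤ M * V x * γ ^ m) :
    ∫ x, (Tk κ 1 g x)^2 ∂π ≤ ρV^2 * ∫ x, g x^2 ∂π := by
  have hBnn : ∀ m : ℕ, 0 ≤ ∫ x, (Tk κ m g x)^2 ∂π :=
    fun m => integral_nonneg fun x => sq_nonneg _
  have hG0 : 0 ≤ ∫ x, g x^2 ∂π := integral_nonneg fun x => sq_nonneg _
  have hBq : ∀ m : ℕ, ∫ x, (Tk κ m g x)^2 ∂π = ∫ x, g x * Tk κ (2*m) g x ∂π := by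
    intro m
    have h1 : ∫ x, (Tk κ m g x)^2 ∂π = ∫ x, Tk κ m g x * Tk κ m g x ∂π :=
      integral_congr_ae (Filter.Eventually.of_forall fun x => by
        show (Tk κ m g x)^2 = Tk κ m g x * Tk κ m g x
        ring)
    rw [h1, qadd κ π hrev hg hc m m, show m + m = 2*m by omega]
  have hCS : ∀ m : ℕ, (∫ x, (Tk κ m g x)^2 ∂π)^2 ≤
      (∫ x, g x^2 ∂π) * ∫ x, (Tk κ (2*m) g x)^2 ∂π := by
    intro m
    rw [hBq m]
    exact cs_int π hg hc (Tk_meas κ hg (2*m)) (Tk_bdd κ hg hc (2*m))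
  have hγ : ∀ γ : ℝ, ρV < γ → ∫ x, (Tk κ 1 g x)^2 ∂π ≤ γ^2 * ∫ x, g x^2 ∂π := by
    intro γ hγρ
    have hγpos : 0 < γ := lt_of_le_of_lt hρ hγρ
    obtain ⟨M, hM⟩ := herg γ hγρ
    refine abstract_contraction (C := c * ((c+1) * M) * (∫ x, V x ∂π)) hBnn hG0 (by positivity) hCS (fun m => ?_)
    rw [hBq m]
    calc ∫ x, g x * Tk κ (2*m) g x ∂π
        ≤ (c * ((c+1) * M) * (∫ x, V x ∂π)) * γ^(2*m) :=
          q0_bound κ π hrev hV1 hVint hg hc hc0 hmean hM (2*m)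
      _ = (c * ((c+1) * M) * (∫ x, V x ∂π)) * (γ^2)^m := by rw [← pow_mul]
  have htend : Filter.Tendsto (fun k : ℕ => (ρV + 1/(k+1))^2 * ∫ x, g x^2 ∂π)
      Filter.atTop (nhds (ρV^2 * ∫ x, g x^2 ∂π)) := by
    have h0 : Filter.Tendsto (fun k : ℕ => ρV + 1/(k+1)) Filter.atTop (nhds ρV) := by
      have := tendsto_one_div_add_atTop_nhds_zero_nat (𝕜 := ℝ)
      simpa using this.const_add ρV
    simpa using (h0.pow 2).mul_const (∫ x, g x^2 ∂π)
  refine ge_of_tendsto' htend (fun k => ?_)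
  refine hγ _ ?_
  have : (0:ℝ) < 1/(k+1) := by positivity
  linarith

lemma contraction_n {ρV : ℝ} (hρ : 0 ≤ ρV)
    (herg : ∀ γ : ℝ, ρV < γ → ∃ M : ℝ, ∀ g' : S → ℝ, Measurable g' →
      (∀ x, |g' x| ≤ V x) → ∀ (m : ℕ) (x : S),
        |(∫ y, g' y ∂(iterKer κ m x)) - ∫ y, g' y ∂π| ≤ M * V x * γ ^ m)
    (n : ℕ) :
    ∫ x, (Tk κ n g x)^2 ∂π ≤ (ρV^n)^2 * ∫ x, g x^2 ∂π := by
  induction n generalizing g c with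
  | zero =>
    simp only [pow_zero, one_pow, one_mul]
    refine le_of_eq (integral_congr_ae (Filter.Eventually.of_forall fun x => ?_))
    show (Tk κ 0 g x)^2 = g x ^2
    rw [Tk_zero κ hg]
  | succ n ih =>
    have h1 : ∫ x, (Tk κ (n+1) g x)^2 ∂π = ∫ x, (Tk κ n (Tk κ 1 g) x)^2 ∂π := by
      refine integral_congr_ae (Filter.Eventually.of_forall fun x => ?_)
      show (Tk κ (n+1) g x)^2 = (Tk κ n (Tk κ 1 g) x)^2
      rw [Tk_succ κ hg hc n x]
    have hg1 : Measurable (Tk κ 1 g) := Tk_meas κ hg 1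
    have hc1 : ∀ x, |Tk κ 1 g x| ≤ c := Tk_bdd κ hg hc 1
    have hmean1 : ∫ x, Tk κ 1 g x ∂π = 0 := by
      rw [int_Tk_one κ π hrev hg hc, hmean]
    have h2 := ih hg1 hc1 hc0 hmean1
    have h3 := onestep κ π hrev hV1 hVint hg hc hc0 hmean hρ herg
    calc ∫ x, (Tk κ (n+1) g x)^2 ∂π = ∫ x, (Tk κ n (Tk κ 1 g) x)^2 ∂π := h1
      _ ≤ (ρV^n)^2 * ∫ x, (Tk κ 1 g x)^2 ∂π := h2
      _ ≤ (ρV^n)^2 * (ρV^2 * ∫ x, g x^2 ∂π) :=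
          mul_le_mul_of_nonneg_left h3 (sq_nonneg _)
      _ = (ρV^(n+1))^2 * ∫ x, g x^2 ∂π := by ring

lemma bounded_case
    {ρV : ℝ} (hρ : 0 ≤ ρV)
    (herg : ∀ γ : ℝ, ρV < γ → ∃ M : ℝ, ∀ g' : S → ℝ, Measurable g' →
      (∀ x, |g' x| ≤ V x) → ∀ (m : ℕ) (x : S),
        |(∫ y, g' y ∂(iterKer κ m x)) - ∫ y, g' y ∂π| ≤ M * V x * γ ^ m)
    (n : ℕ) :
    eLpNorm (fun x => Tk κ n g x) 2 π ≤
      ENNReal.ofReal (ρV ^ n) * eLpNorm g 2 π := by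
  have hTn : ∀ x, |Tk κ n g x| ≤ c := Tk_bdd κ hg hc n
  rw [eLpNorm_sq_eq π (Tk_meas κ hg n) hTn, eLpNorm_sq_eq π hg hc,
    ← ENNReal.ofReal_mul (by positivity)]
  refine ENNReal.ofReal_le_ofReal ?_
  exact rpow_half_sq (integral_nonneg fun x => sq_nonneg _)
    (integral_nonneg fun x => sq_nonneg _) (by positivity)
    (contraction_n κ π hrev hV1 hVint hg hc hc0 hmean hρ herg n)

end erg
section bc
variable (hrev : ∀ A B : Set S, MeasurableSet A → MeasurableSet B →
      ∫ x in A, (κ x B).toReal ∂π = ∫ x in B, (κ x A).toReal ∂π)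
  {V : S → ℝ} (hV1 : ∀ x, 1 ≤ V x) (hVint : Integrable V π)

include hrev hV1 hVint

lemma Tk_sub_const {f : S → ℝ} (hf : Measurable f) {c : ℝ} (hc : ∀ x, |f x| ≤ c)
    (r : ℝ) (n : ℕ) (x : S) :
    Tk κ n (fun y => f y - r) x = Tk κ n f x - r := by
  show (∫ y, (f y - r) ∂(iterKer κ n x)) = Tk κ n f x - r
  rw [integral_sub (bddInt hf hc) (integrable_const r), integral_const]
  simp [Tk]

lemma bounded_case' {ρV : ℝ} (hρ : 0 ≤ ρV)
    (herg : ∀ γ : ℝ, ρV < γ → ∃ M : ℝ, ∀ g' : S → ℝ, Measurable g' →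
      (∀ x, |g' x| ≤ V x) → ∀ (m : ℕ) (x : S),
        |(∫ y, g' y ∂(iterKer κ m x)) - ∫ y, g' y ∂π| ≤ M * V x * γ ^ m)
    {f : S → ℝ} (hf : Measurable f) {c : ℝ} (hc : ∀ x, |f x| ≤ c) (n : ℕ) :
    eLpNorm (fun x => Tk κ n f x - ∫ y, f y ∂π) 2 π ≤
      ENNReal.ofReal (ρV ^ n) * eLpNorm (fun x => f x - ∫ y, f y ∂π) 2 π := by
  set m : ℝ := ∫ y, f y ∂π with hm
  set g : S → ℝ := fun x => f x - m with hgdef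
  have hgm : Measurable g := hf.sub measurable_const
  have hgc : ∀ x, |g x| ≤ |c| + |m| := fun x => by
    calc |g x| ≤ |f x| + |m| := abs_sub _ _
      _ ≤ |c| + |m| := by linarith [(hc x).trans (le_abs_self c)]
  have hgc0 : (0:ℝ) ≤ |c| + |m| := by positivity
  have hgmean : ∫ x, g x ∂π = 0 := by
    rw [hgdef]
    rw [integral_sub (bddInt hf hc) (integrable_const m), integral_const]
    simp [hm]
  have hTg : (fun x => Tk κ n f x - m) = Tk κ n g := by
    funext x
    rw [hgdef, Tk_sub_const κ π hrev hV1 hVint hf hc m n x]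
  rw [hTg]
  exact bounded_case κ π hrev hV1 hVint hgm hgc hgc0 hgmean hρ herg n

end bc

end aux


theorem stmt18 {S : Type*} [MeasurableSpace S] (κ : Kernel S S) [IsMarkovKernel κ]
    (π : Measure S) [IsProbabilityMeasure π]
    (hinv : ∀ A : Set S, MeasurableSet A → ∫ x, (κ x A).toReal ∂π = (π A).toReal)
    (hrev : ∀ A B : Set S, MeasurableSet A → MeasurableSet B →
      ∫ x in A, (κ x B).toReal ∂π = ∫ x in B, (κ x A).toReal ∂π)
    (V : S → ℝ) (hVm : Measurable V) (hV1 : ∀ x, 1 ≤ V x) (hVint : Integrable V π)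
    (ρV : ℝ) (hρ : 0 ≤ ρV)
    (herg : ∀ γ : ℝ, ρV < γ → ∃ M : ℝ, ∀ g : S → ℝ, Measurable g →
      (∀ x, |g x| ≤ V x) → ∀ (n : ℕ) (x : S),
        |(∫ y, g y ∂(iterKer κ n x)) - ∫ y, g y ∂π| ≤ M * V x * γ ^ n) :
    ∀ f : S → ℝ, MemLp f 2 π → ∀ n : ℕ,
      eLpNorm (fun x => (∫ y, f y ∂(iterKer κ n x)) - ∫ y, f y ∂π) 2 π ≤
        ENNReal.ofReal (ρV ^ n) * eLpNorm (fun x => f x - ∫ y, f y ∂π) 2 π := by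
  intro f hf n
  -- replace f by a measurable representative
  set f₀ : S → ℝ := hf.1.mk f with hf₀def
  have hf0sm : StronglyMeasurable f₀ := hf.1.stronglyMeasurable_mk
  have hf0m : Measurable f₀ := hf0sm.measurable
  have hae : f =ᵐ[π] f₀ := hf.1.ae_eq_mk
  have hf₀ : MemLp f₀ 2 π := hf.ae_eq hae
  have hm : ∫ y, f y ∂π = ∫ y, f₀ y ∂π := integral_congr_ae hae
  set m₀ : ℝ := ∫ y, f₀ y ∂π with hm₀def
  have hae' : π {x | ¬ f x = f₀ x} = 0 := ae_iff.mp hae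
  obtain ⟨N, hsub, hNm, hN0⟩ := exists_measurable_superset_of_null hae'
  have haeK : (fun x => (∫ y, f y ∂(iterKer κ n x)) - ∫ y, f y ∂π)
      =ᵐ[π] (fun x => Tk κ n f₀ x - m₀) := by
    filter_upwards [ae_iter_null κ π hinv n hNm hN0] with x hx
    have h1 : f =ᵐ[iterKer κ n x] f₀ :=
      ae_iff.mpr (measure_mono_null hsub hx)
    rw [hm, integral_congr_ae h1]
    rfl
  have haeR : (fun x => f x - ∫ y, f y ∂π) =ᵐ[π] (fun x => f₀ x - m₀) := by
    filter_upwards [hae] with x hx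
    rw [hx, hm]
  rw [eLpNorm_congr_ae haeK, eLpNorm_congr_ae haeR]
  -- truncations
  set fk : ℕ → S → ℝ := fun k x => max (min (f₀ x) (k:ℝ)) (-(k:ℝ)) with hfkdef
  have hfkm : ∀ k, Measurable (fk k) := fun k =>
    (hf0m.min measurable_const).max measurable_const
  have hfkb : ∀ k x, |fk k x| ≤ (k:ℝ) := by
    intro k x
    rw [abs_le]
    constructor
    · exact le_max_right _ _
    · refine max_le ((min_le_right _ _)) ?_
      have : (0:ℝ) ≤ (k:ℝ) := Nat.cast_nonneg k
      linarith
  have habs : ∀ k x, |fk k x| ≤ |f₀ x| := by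
    intro k x
    rw [abs_le]
    constructor
    · refine le_trans (le_min (neg_abs_le (f₀ x)) ?_) (le_max_left _ _)
      have : (0:ℝ) ≤ (k:ℝ) := by positivity
      linarith [abs_nonneg (f₀ x)]
    · refine max_le ((min_le_left _ _).trans (le_abs_self _)) ?_
      have : (0:ℝ) ≤ (k:ℝ) := by positivity
      linarith [abs_nonneg (f₀ x)]
  have hptw : ∀ x, Filter.Tendsto (fun k : ℕ => fk k x) Filter.atTop (nhds (f₀ x)) := by
    intro x
    refine Filter.Tendsto.congr' ?_ (tendsto_const_nhds (x := f₀ x))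
    refine (Filter.eventually_atTop.mpr ⟨⌈|f₀ x|⌉₊, fun k hk => ?_⟩)
    have hk' : |f₀ x| ≤ (k:ℝ) := (Nat.ceil_le.mp hk)
    have h1 : f₀ x ≤ (k:ℝ) := (le_abs_self _).trans hk'
    have h2 : -(k:ℝ) ≤ f₀ x := by
      have := neg_abs_le (f₀ x); linarith
    rw [hfkdef]
    simp only [min_eq_left h1, max_eq_left h2]
  have hint : Integrable f₀ π := hf₀.integrable one_le_two
  set mk : ℕ → ℝ := fun k => ∫ x, fk k x ∂π with hmkdef
  have hmk : Filter.Tendsto mk Filter.atTop (nhds m₀) := by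
    refine tendsto_integral_of_dominated_convergence (fun x => |f₀ x|)
      (fun k => (hfkm k).aestronglyMeasurable) hint.abs
      (fun k => Filter.Eventually.of_forall fun x => by
        simpa [Real.norm_eq_abs] using habs k x)
      (Filter.Eventually.of_forall hptw)
  -- a.e. integrability under the n-step kernel
  have hGm : Measurable fun x => ∫⁻ y, (‖f₀ y‖₊ : ℝ≥0∞) ∂(iterKer κ n x) := by
    have : Measurable fun p : S × S => (‖f₀ p.2‖₊ : ℝ≥0∞) :=
      (hf0m.comp measurable_snd).nnnorm.coe_nnreal_ennreal
    exact this.lintegral_kernel_prod_right'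
  have hfin : ∫⁻ x, (∫⁻ y, (‖f₀ y‖₊ : ℝ≥0∞) ∂(iterKer κ n x)) ∂π ≠ ⊤ := by
    rw [lint_iter_inv κ π hinv n hf0m.nnnorm.coe_nnreal_ennreal]
    exact hint.2.ne
  have haeint : ∀ᵐ x ∂π, Integrable f₀ (iterKer κ n x) := by
    filter_upwards [ae_lt_top hGm hfin] with x hx
    exact ⟨hf0sm.aestronglyMeasurable, hx⟩
  have haeT : ∀ᵐ x ∂π, Filter.Tendsto (fun k => Tk κ n (fk k) x - mk k) Filter.atTop
      (nhds (Tk κ n f₀ x - m₀)) := by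
    filter_upwards [haeint] with x hx
    refine Filter.Tendsto.sub ?_ hmk
    exact tendsto_integral_of_dominated_convergence (fun y => |f₀ y|)
      (fun k => (hfkm k).aestronglyMeasurable) hx.abs
      (fun k => Filter.Eventually.of_forall fun y => by
        simpa [Real.norm_eq_abs] using habs k y)
      (Filter.Eventually.of_forall hptw)
  -- liminf bound
  have hstep1 : eLpNorm (fun x => Tk κ n f₀ x - m₀) 2 π ≤
      Filter.atTop.liminf fun k => eLpNorm (fun x => Tk κ n (fk k) x - mk k) 2 π := by
    refine Lp.eLpNorm_lim_le_liminf_eLpNorm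
      (fun k => ((Tk_meas κ (hfkm k) n).sub measurable_const).aestronglyMeasurable) _ haeT
  set A : ℝ≥0∞ := eLpNorm (fun x => f₀ x - m₀) 2 π with hAdef
  set ε : ℕ → ℝ≥0∞ := fun k =>
    eLpNorm (fun x => fk k x - f₀ x) 2 π + (‖m₀ - mk k‖₊ : ℝ≥0∞) with hεdef
  have htri : ∀ k, eLpNorm (fun x => fk k x - mk k) 2 π ≤ A + ε k := by
    intro k
    have hdec : (fun x => fk k x - mk k) =
        (fun x => (f₀ x - m₀) + ((fk k x - f₀ x) + (m₀ - mk k))) := by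
      funext x; ring
    rw [hdec]
    refine le_trans (eLpNorm_add_le
      (hf0m.sub measurable_const).aestronglyMeasurable
      (((hfkm k).sub hf0m).add_const _).aestronglyMeasurable one_le_two) ?_
    rw [hAdef, hεdef]
    refine add_le_add_right ?_ A
    refine le_trans (eLpNorm_add_le ((hfkm k).sub hf0m).aestronglyMeasurable
      aestronglyMeasurable_const one_le_two) ?_
    refine add_le_add_right ?_ _
    have hπ0 : π ≠ 0 := IsProbabilityMeasure.ne_zero π
    rw [eLpNorm_const _ (by norm_num) hπ0]
    simp
  have hε0 : Filter.Tendsto ε Filter.atTop (nhds 0) := by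
    have h1 : Filter.Tendsto (fun k => eLpNorm (fun x => fk k x - f₀ x) 2 π)
        Filter.atTop (nhds 0) := by
      have hDCT : Filter.Tendsto
          (fun k => ∫⁻ x, (‖fk k x - f₀ x‖₊ : ℝ≥0∞) ^ (2:ℝ) ∂π)
          Filter.atTop (nhds 0) := by
        have hlim0 : ∫⁻ (x : S), 0 ∂π = 0 := lintegral_zero
        refine hlim0 ▸ tendsto_lintegral_of_dominated_convergence
          (fun x => ((2:ℝ≥0∞) * ‖f₀ x‖₊) ^ (2:ℝ))
          (fun k => (((hfkm k).sub hf0m).nnnorm.coe_nnreal_ennreal).pow_const _)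
          (fun k => Filter.Eventually.of_forall fun x => ?_) ?_
          (Filter.Eventually.of_forall fun x => ?_)
        · refine ENNReal.rpow_le_rpow ?_ (by norm_num)
          have hb : ‖fk k x - f₀ x‖₊ ≤ ‖fk k x‖₊ + ‖f₀ x‖₊ := nnnorm_sub_le _ _
          have hb2 : ‖fk k x‖₊ ≤ ‖f₀ x‖₊ := by
            rw [← NNReal.coe_le_coe]
            simpa [Real.norm_eq_abs] using habs k x
          calc ((‖fk k x - f₀ x‖₊ : ℝ≥0∞)) ≤ (‖fk k x‖₊ : ℝ≥0∞) + ‖f₀ x‖₊ := by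
                exact_mod_cast hb
            _ ≤ (‖f₀ x‖₊ : ℝ≥0∞) + ‖f₀ x‖₊ := by
                exact add_le_add_left (by exact_mod_cast hb2) _
            _ = 2 * ‖f₀ x‖₊ := by ring
        · have hsq : ∀ x : S, ((2:ℝ≥0∞) * ‖f₀ x‖₊) ^ (2:ℝ) =
              (2:ℝ≥0∞)^(2:ℝ) * (‖f₀ x‖₊ : ℝ≥0∞) ^ (2:ℝ) := fun x =>
            ENNReal.mul_rpow_of_nonneg _ _ (by norm_num)
          simp only [hsq]
          rw [lintegral_const_mul _ (hf0m.nnnorm.coe_nnreal_ennreal.pow_const _)]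
          refine ENNReal.mul_ne_top (by simp) ?_
          have := lintegral_rpow_enorm_lt_top_of_eLpNorm_lt_top (p := 2)
            (by norm_num) (by norm_num) hf₀.2
          simpa [enorm_eq_nnnorm] using this.ne
        · have hev : ∀ᶠ k in Filter.atTop, (‖fk k x - f₀ x‖₊ : ℝ≥0∞) ^ (2:ℝ) = 0 := by
            refine Filter.eventually_atTop.mpr ⟨⌈|f₀ x|⌉₊, fun k hk => ?_⟩
            have hk' : |f₀ x| ≤ (k:ℝ) := Nat.ceil_le.mp hk
            have h1 : f₀ x ≤ (k:ℝ) := (le_abs_self _).trans hk'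
            have h2 : -(k:ℝ) ≤ f₀ x := by
              have := neg_abs_le (f₀ x); linarith
            have : fk k x = f₀ x := by
              rw [hfkdef]; simp only [min_eq_left h1, max_eq_left h2]
            rw [this, sub_self]
            rw [nnnorm_zero, ENNReal.coe_zero]
            exact ENNReal.zero_rpow_of_pos (by norm_num)
          exact Filter.Tendsto.congr' (hev.mono fun k hk => hk.symm) tendsto_const_nhds
      have heq : ∀ k, eLpNorm (fun x => fk k x - f₀ x) 2 π =
          (∫⁻ x, (‖fk k x - f₀ x‖₊ : ℝ≥0∞) ^ (2:ℝ) ∂π) ^ (1/(2:ℝ)) := by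
        intro k
        rw [eLpNorm_eq_lintegral_rpow_enorm_toReal (by norm_num) (by norm_num)]
        norm_num [enorm_eq_nnnorm]
      simp only [heq]
      have := Filter.Tendsto.ennrpow_const (1/(2:ℝ)) hDCT
      simpa [ENNReal.zero_rpow_of_pos] using this
    have h2 : Filter.Tendsto (fun k => ((‖m₀ - mk k‖₊ : ℝ≥0∞))) Filter.atTop (nhds 0) := by
      rw [← ENNReal.coe_zero]
      refine ENNReal.tendsto_coe.mpr ?_
      have : Filter.Tendsto (fun k => m₀ - mk k) Filter.atTop (nhds 0) := by
        simpa using (tendsto_const_nhds (x := m₀)).sub hmk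
      simpa [Function.comp_def] using (continuous_nnnorm.tendsto 0).comp this
    simpa using h1.add h2
  have hstep2 : ∀ k, eLpNorm (fun x => Tk κ n (fk k) x - mk k) 2 π ≤
      ENNReal.ofReal (ρV ^ n) * (A + ε k) := by
    intro k
    have := bounded_case' κ π hrev hV1 hVint hρ herg (hfkm k) (hfkb k) n
    have heqq : ∀ j : ℕ, (∫ y, fk j y ∂π) = mk j := fun j => rfl
    rw [heqq k] at this
    refine this.trans ?_
    exact mul_le_mul_right (htri k) _
  have hlim : Filter.Tendsto (fun k => ENNReal.ofReal (ρV ^ n) * (A + ε k))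
      Filter.atTop (nhds (ENNReal.ofReal (ρV ^ n) * (A + 0))) :=
    ENNReal.Tendsto.const_mul (Filter.Tendsto.const_add A hε0)
      (Or.inr ENNReal.ofReal_ne_top)
  calc eLpNorm (fun x => Tk κ n f₀ x - m₀) 2 π
      ≤ Filter.atTop.liminf fun k => eLpNorm (fun x => Tk κ n (fk k) x - mk k) 2 π := hstep1
    _ ≤ Filter.atTop.liminf fun k => ENNReal.ofReal (ρV ^ n) * (A + ε k) :=
        Filter.liminf_le_liminf (Filter.Eventually.of_forall hstep2)
    _ = ENNReal.ofReal (ρV ^ n) * (A + 0) := hlim.liminf_eq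
    _ = ENNReal.ofReal (ρV ^ n) * A := by rw [add_zero]
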